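/- Let K be a finite abstract simplicial complex and let f, g : K → ℝ^m be non-decreasing maps. Then d(ECP_f, ECP_g) ≤ Σ_{σ∈K} ‖f(σ) − g(σ)‖₁, where ‖·‖₁ is the ℓ¹ norm on ℝ^m. -/

import Mathlib

open scoped Classical ENNReal

/-- A finite abstract simplicial complex on a vertex set `V`. -/
structure SimplicialCplx (V : Type*) where
  faces : Finset (Finset V)
  nonempty_faces : ∀ σ ∈ faces, σ.Nonempty
  down_closed : ∀ σ ∈ faces, ∀ τ, τ ⊆ σ → τ.Nonempty → τ ∈ faces

/-- Indicator of the upper set `Q_u = {t | u ≤ t}` (coordinatewise order on `ℝ^m`). -/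
noncomputable def indQ {m : ℕ} (u t : Fin m → ℝ) : ℤ := if u ≤ t then 1 else 0

/-- `(P, N)` is a decomposition of `φ` if `φ = Σ_{u ∈ P} 1_{Q_u} − Σ_{v ∈ N} 1_{Q_v}`. -/
def IsDecomp {m : ℕ} (φ : (Fin m → ℝ) → ℤ) (P N : Multiset (Fin m → ℝ)) : Prop :=
  ∀ t, φ t = (P.map fun u => indQ u t).sum - (N.map fun u => indQ u t).sum

/-- The ℓ¹ distance on `ℝ^m`. -/
noncomputable def l1 {m : ℕ} (u v : Fin m → ℝ) : ℝ := ∑ i, |u i - v i|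

/-- The signed 1-Wasserstein distance between finitely presented functions. -/
noncomputable def signedDist1W {m : ℕ} (φ φ' : (Fin m → ℝ) → ℤ) : ℝ≥0∞ :=
  sInf { c : ℝ≥0∞ | ∃ (P N P' N' : Multiset (Fin m → ℝ))
      (pr : Multiset ((Fin m → ℝ) × (Fin m → ℝ))),
      IsDecomp φ P N ∧ IsDecomp φ' P' N' ∧
      pr.map Prod.fst = P + N' ∧ pr.map Prod.snd = N + P' ∧
      c = ENNReal.ofReal ((pr.map fun uv => l1 uv.1 uv.2).sum) }

/-- The Euler characteristic profile of a non-decreasing filter `f : K → ℝ^m`: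
`ECP_f(t) = Σ_{σ ∈ K, f σ ≤ t} (−1)^{dim σ}`. -/
noncomputable def ECP {V : Type*} {m : ℕ} (K : SimplicialCplx V)
    (f : Finset V → (Fin m → ℝ)) : (Fin m → ℝ) → ℤ :=
  fun t => ∑ σ ∈ K.faces.filter (fun σ => f σ ≤ t), (-1 : ℤ) ^ (σ.card - 1)

/-- For a finite simplicial complex `K` and non-decreasing maps
`f, g : K → ℝ^m`, `d(ECP_f, ECP_g) ≤ Σ_{σ ∈ K} ‖f σ − g σ‖₁`. -/
lemma decomp_aux {V : Type*} {m : ℕ} (K : SimplicialCplx V)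
    (f : Finset V → (Fin m → ℝ)) :
    IsDecomp (ECP K f)
      ((K.faces.filter (fun σ => Even (σ.card - 1))).val.map f)
      ((K.faces.filter (fun σ => ¬ Even (σ.card - 1))).val.map f) := by
  intro t
  show (∑ σ ∈ K.faces.filter (fun σ => f σ ≤ t), (-1 : ℤ) ^ (σ.card - 1)) = _
  rw [Multiset.map_map, Multiset.map_map]
  have h1 : ((K.faces.filter (fun σ => Even (σ.card - 1))).val.map
      (fun σ => indQ (f σ) t)).sum
      = ∑ σ ∈ K.faces.filter (fun σ => Even (σ.card - 1)), indQ (f σ) t := rfl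
  have h2 : ((K.faces.filter (fun σ => ¬ Even (σ.card - 1))).val.map
      (fun σ => indQ (f σ) t)).sum
      = ∑ σ ∈ K.faces.filter (fun σ => ¬ Even (σ.card - 1)), indQ (f σ) t := rfl
  show _ = ((K.faces.filter (fun σ => Even (σ.card - 1))).val.map
      (fun σ => indQ (f σ) t)).sum - ((K.faces.filter (fun σ => ¬ Even (σ.card - 1))).val.map
      (fun σ => indQ (f σ) t)).sum
  rw [h1, h2, Finset.sum_filter, Finset.sum_filter, Finset.sum_filter,
    ← Finset.sum_sub_distrib]
  apply Finset.sum_congr rfl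
  intro σ _
  unfold indQ
  by_cases he : Even (σ.card - 1)
  · rw [he.neg_one_pow]
    split_ifs <;> simp_all
  · rw [(Nat.not_even_iff_odd.mp he).neg_one_pow]
    split_ifs <;> simp_all

lemma split_aux {V : Type*} {m : ℕ} (K : SimplicialCplx V)
    (f g : Finset V → (Fin m → ℝ)) (h : Finset V → (Fin m → ℝ))
    (hev : ∀ σ, Even (σ.card - 1) → h σ = f σ)
    (hodd : ∀ σ, ¬ Even (σ.card - 1) → h σ = g σ) :
    K.faces.val.map h =
      (K.faces.filter (fun σ => Even (σ.card - 1))).val.map f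
      + (K.faces.filter (fun σ => ¬ Even (σ.card - 1))).val.map g := by
  have hsplit : K.faces.val
      = (K.faces.filter (fun σ => Even (σ.card - 1))).val
      + (K.faces.filter (fun σ => ¬ Even (σ.card - 1))).val := by
    rw [Finset.filter_val, Finset.filter_val]
    exact (Multiset.filter_add_not _ _).symm
  rw [hsplit, Multiset.map_add]
  congr 1
  · apply Multiset.map_congr rfl
    intro σ hσ
    exact hev σ (Finset.mem_filter.mp hσ).2
  · apply Multiset.map_congr rfl
    intro σ hσ
    exact hodd σ (Finset.mem_filter.mp hσ).2

theorem stmt6 {V : Type*} (m : ℕ) (K : SimplicialCplx V)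
    (f g : Finset V → (Fin m → ℝ))
    (hf : ∀ σ ∈ K.faces, ∀ τ ∈ K.faces, σ ⊆ τ → f σ ≤ f τ)
    (hg : ∀ σ ∈ K.faces, ∀ τ ∈ K.faces, σ ⊆ τ → g σ ≤ g τ) :
    signedDist1W (ECP K f) (ECP K g)
      ≤ ENNReal.ofReal (∑ σ ∈ K.faces, l1 (f σ) (g σ)) := by
  apply sInf_le
  refine ⟨(K.faces.filter (fun σ => Even (σ.card - 1))).val.map f,
    (K.faces.filter (fun σ => ¬ Even (σ.card - 1))).val.map f,
    (K.faces.filter (fun σ => Even (σ.card - 1))).val.map g,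
    (K.faces.filter (fun σ => ¬ Even (σ.card - 1))).val.map g,
    K.faces.val.map (fun σ => if Even (σ.card - 1) then (f σ, g σ) else (g σ, f σ)),
    decomp_aux K f, decomp_aux K g, ?_, ?_, ?_⟩
  · rw [Multiset.map_map]
    apply split_aux
    · intro σ hσ; simp [hσ]
    · intro σ hσ; simp [hσ]
  · rw [Multiset.map_map, add_comm]
    apply split_aux
    · intro σ hσ; simp [hσ]
    · intro σ hσ; simp [hσ]
  · congr 1
    rw [Multiset.map_map]
    have : ∑ σ ∈ K.faces, l1 (f σ) (g σ)
        = (K.faces.val.map (fun σ => l1 (f σ) (g σ))).sum := rfl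
    rw [this]
    apply congrArg Multiset.sum
    apply Multiset.map_congr rfl
    intro σ _
    by_cases hσ : Even (σ.card - 1) <;> simp [hσ, l1, abs_sub_comm]
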